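/- arXiv:1410.3083 — 4 statements merged into one kernel-verified Lean document; each statement's English description precedes it below -/
import Mathlib

section
/- For four sensor regions with all triple intersections non-empty and quadruple intersection empty, given sensor counts (n₁,n₂,n₃,n₄) with nᵢ ≥ 0, the maximum of n·y over the polytope {y ∈ ℝ⁴ : y ≥ 0, Σ_{i∈σ} yᵢ ≤ 1 for every 3-element subset σ ⊆ {1,2,3,4}} equals max(n₁, n₂, n₃, n₄, (n₁+n₂+n₃+n₄)/3). -/
set_option maxHeartbeats 2000000 in
private lemma stmt2_core (n0 n1 n2 n3 y0 y1 y2 y3 M : ℝ)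
    (g0 : 0 ≤ n0) (g1 : 0 ≤ n1) (g2 : 0 ≤ n2) (g3 : 0 ≤ n3)
    (e0 : 0 ≤ y0) (e1 : 0 ≤ y1) (e2 : 0 ≤ y2) (e3 : 0 ≤ y3)
    (h0 : n0 ≤ M) (h1 : n1 ≤ M) (h2 : n2 ≤ M) (h3 : n3 ≤ M)
    (hS : n0+n1+n2+n3 ≤ 3*M)
    (c0 : y1+y2+y3 ≤ 1) (c1 : y0+y2+y3 ≤ 1) (c2 : y0+y1+y3 ≤ 1) (c3 : y0+y1+y2 ≤ 1) :
    n0*y0+n1*y1+n2*y2+n3*y3 ≤ M := by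
  nlinarith [mul_nonneg (sub_nonneg.2 h0) (sub_nonneg.2 c0), mul_nonneg (sub_nonneg.2 h1) (sub_nonneg.2 c1), mul_nonneg (sub_nonneg.2 h2) (sub_nonneg.2 c2), mul_nonneg (sub_nonneg.2 h3) (sub_nonneg.2 c3),
   mul_nonneg g0 (sub_nonneg.2 c0), mul_nonneg g1 (sub_nonneg.2 c1), mul_nonneg g2 (sub_nonneg.2 c2), mul_nonneg g3 (sub_nonneg.2 c3),
   mul_nonneg (sub_nonneg.2 h0) e0, mul_nonneg (sub_nonneg.2 h1) e1, mul_nonneg (sub_nonneg.2 h2) e2, mul_nonneg (sub_nonneg.2 h3) e3,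
   mul_nonneg e0 (sub_nonneg.2 hS), mul_nonneg e1 (sub_nonneg.2 hS), mul_nonneg e2 (sub_nonneg.2 hS), mul_nonneg e3 (sub_nonneg.2 hS)]

/-- For the fusion polytope of the boundary of the tetrahedron, the maximum of
n·y equals max(n₁,n₂,n₃,n₄,(n₁+n₂+n₃+n₄)/3). -/
theorem stmt2 (n : Fin 4 → ℝ) (hn : ∀ i, 0 ≤ n i) :
    IsGreatest
      {v : ℝ | ∃ y : Fin 4 → ℝ, (∀ i, 0 ≤ y i) ∧
        (∀ σ : Finset (Fin 4), σ.card = 3 → ∑ i ∈ σ, y i ≤ 1) ∧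
        v = ∑ i, n i * y i}
      (max (max (max (n 0) (n 1)) (max (n 2) (n 3)))
        ((n 0 + n 1 + n 2 + n 3) / 3)) := by
  constructor
  · -- membership
    rcases le_total (max (max (n 0) (n 1)) (max (n 2) (n 3)))
        ((n 0 + n 1 + n 2 + n 3) / 3) with h | h
    · rw [max_eq_right h]
      refine ⟨fun _ => 1/3, fun i => by norm_num, fun σ hσ => by
        rw [Finset.sum_const, hσ]; norm_num, ?_⟩
      rw [Fin.sum_univ_four]; ring
    · rw [max_eq_left h]
      have hex : ∃ k : Fin 4, max (max (n 0) (n 1)) (max (n 2) (n 3)) = n k := by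
        rcases le_total (n 0) (n 1) with h1 | h1 <;>
          rcases le_total (n 2) (n 3) with h2 | h2 <;>
          rcases le_total (max (n 0) (n 1)) (max (n 2) (n 3)) with h3 | h3
        · exact ⟨3, by rw [max_eq_right h3, max_eq_right h2]⟩
        · exact ⟨1, by rw [max_eq_left h3, max_eq_right h1]⟩
        · exact ⟨2, by rw [max_eq_right h3, max_eq_left h2]⟩
        · exact ⟨1, by rw [max_eq_left h3, max_eq_right h1]⟩
        · exact ⟨3, by rw [max_eq_right h3, max_eq_right h2]⟩
        · exact ⟨0, by rw [max_eq_left h3, max_eq_left h1]⟩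
        · exact ⟨2, by rw [max_eq_right h3, max_eq_left h2]⟩
        · exact ⟨0, by rw [max_eq_left h3, max_eq_left h1]⟩
      obtain ⟨k, hk⟩ := hex
      rw [hk]
      refine ⟨fun i => if i = k then 1 else 0, fun i => by dsimp only; split <;> norm_num,
        fun σ hσ => ?_, ?_⟩
      · rw [Finset.sum_ite_eq' σ k (fun _ => (1:ℝ))]
        split_ifs <;> norm_num
      · simp [mul_ite]
  · -- upper bound
    rintro v ⟨y, hy, hc, rfl⟩
    set M := max (max (max (n 0) (n 1)) (max (n 2) (n 3)))
        ((n 0 + n 1 + n 2 + n 3) / 3) with hM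
    have h0 : n 0 ≤ M := le_max_of_le_left (le_max_of_le_left (le_max_left _ _))
    have h1 : n 1 ≤ M := le_max_of_le_left (le_max_of_le_left (le_max_right _ _))
    have h2 : n 2 ≤ M := le_max_of_le_left (le_max_of_le_right (le_max_left _ _))
    have h3 : n 3 ≤ M := le_max_of_le_left (le_max_of_le_right (le_max_right _ _))
    have hS : n 0 + n 1 + n 2 + n 3 ≤ 3 * M := by
      have := le_max_right (max (max (n 0) (n 1)) (max (n 2) (n 3)))
        ((n 0 + n 1 + n 2 + n 3) / 3)
      linarith
    have c0 : y 1 + y 2 + y 3 ≤ 1 := by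
      have := hc {1,2,3} (by decide); simp at this; linarith
    have c1 : y 0 + y 2 + y 3 ≤ 1 := by
      have := hc {0,2,3} (by decide); simp at this; linarith
    have c2 : y 0 + y 1 + y 3 ≤ 1 := by
      have := hc {0,1,3} (by decide); simp at this; linarith
    have c3 : y 0 + y 1 + y 2 ≤ 1 := by
      have := hc {0,1,2} (by decide); simp at this; linarith
    rw [Fin.sum_univ_four]
    exact stmt2_core (n 0) (n 1) (n 2) (n 3) (y 0) (y 1) (y 2) (y 3) M
      (hn 0) (hn 1) (hn 2) (hn 3) (hy 0) (hy 1) (hy 2) (hy 3)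
      h0 h1 h2 h3 hS c0 c1 c2 c3
end

section
/- Let S = (S₁,…,S_R) be a generic sensor configuration with integer sensor measurements n = (n₁,…,n_R). If k is an achievable total integer count (i.e., there is an assignment of non-negative integers to the atoms, summing over the atoms contained in each S_r to n_r, with total k), and k is strictly less than the maximum achievable total count n₁+⋯+n_R, then k+1 is also achievable. Consequently the set of achievable integer total counts is an interval of integers. -/
/-- For a generic sensor configuration with integer measurements, if k is an
achievable total integer count and k is strictly less than the maximum n₁+⋯+n_R,
then k+1 is also achievable. -/
theorem stmt5 {Ω : Type*} {R : ℕ} (S : Fin R → Set Ω)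
    (hcover : (⋃ r, S r) = Set.univ)
    (hgen : ∀ A : Finset (Fin R), A.Nonempty → (⋂ i ∈ A, S i).Nonempty →
      ¬ (⋂ i ∈ A, S i) ⊆ ⋃ j ∈ Aᶜ, S j)
    (n : Fin R → ℕ) (k : ℕ)
    (hk : ∃ m : Finset (Fin R) → ℕ,
      (∀ A : Finset (Fin R),
        ¬ (A.Nonempty ∧ ((⋂ i ∈ A, S i) ∩ (⋂ j ∈ Aᶜ, (S j)ᶜ)).Nonempty) →
        m A = 0) ∧
      (∀ r, (∑ A : Finset (Fin R), if r ∈ A then m A else 0) = n r) ∧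
      (∑ A : Finset (Fin R), m A) = k)
    (hlt : k < ∑ r, n r) :
    ∃ m : Finset (Fin R) → ℕ,
      (∀ A : Finset (Fin R),
        ¬ (A.Nonempty ∧ ((⋂ i ∈ A, S i) ∩ (⋂ j ∈ Aᶜ, (S j)ᶜ)).Nonempty) →
        m A = 0) ∧
      (∀ r, (∑ A : Finset (Fin R), if r ∈ A then m A else 0) = n r) ∧
      (∑ A : Finset (Fin R), m A) = k + 1 := by
  obtain ⟨m, h0, h1, h2⟩ := hk
  -- total with multiplicity
  have hsum : ∑ B : Finset (Fin R), B.card * m B = ∑ r, n r := by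
    have h : ∑ r : Fin R, ∑ B : Finset (Fin R), (if r ∈ B then m B else 0) = ∑ r, n r :=
      Finset.sum_congr rfl (fun r _ => h1 r)
    rw [Finset.sum_comm] at h
    rw [← h]
    refine Finset.sum_congr rfl (fun B _ => ?_)
    rw [Finset.sum_ite_mem, Finset.univ_inter, Finset.sum_const, smul_eq_mul]
  -- find an atom with at least two sensors and positive mass
  obtain ⟨A, hApos, hA2⟩ : ∃ A : Finset (Fin R), 0 < m A ∧ 2 ≤ A.card := by
    by_contra h
    push_neg at h
    have hb : ∀ B ∈ Finset.univ, B.card * m B ≤ m B := by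
      intro B _
      rcases Nat.eq_zero_or_pos (m B) with h' | h'
      · simp [h']
      · have := h B h'
        calc B.card * m B ≤ 1 * m B := Nat.mul_le_mul_right _ (by omega)
          _ = m B := one_mul _
    have := Finset.sum_le_sum hb
    rw [hsum, h2] at this
    omega
  have hcondA : A.Nonempty ∧ ((⋂ i ∈ A, S i) ∩ (⋂ j ∈ Aᶜ, (S j)ᶜ)).Nonempty := by
    by_contra h
    exact absurd (h0 A h) hApos.ne'
  obtain ⟨hAne, x, hx⟩ := hcondA
  have hxA : x ∈ ⋂ i ∈ A, S i := hx.1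
  obtain ⟨i, hi⟩ := hAne
  -- validity of the atom {i}
  have condI : ({i} : Finset (Fin R)).Nonempty ∧
      ((⋂ j ∈ ({i} : Finset (Fin R)), S j) ∩
        (⋂ j ∈ ({i} : Finset (Fin R))ᶜ, (S j)ᶜ)).Nonempty := by
    refine ⟨⟨i, Finset.mem_singleton_self i⟩, ?_⟩
    have hne : (⋂ j ∈ ({i} : Finset (Fin R)), S j).Nonempty := by
      refine ⟨x, ?_⟩
      simp only [Set.mem_iInter] at hxA ⊢
      intro j hj
      rw [Finset.mem_singleton] at hj
      exact hj ▸ hxA i hi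
    have := hgen {i} ⟨i, Finset.mem_singleton_self i⟩ hne
    obtain ⟨y, hy1, hy2⟩ := Set.not_subset.mp this
    refine ⟨y, hy1, ?_⟩
    simp only [Set.mem_iUnion, not_exists] at hy2
    simp only [Set.mem_iInter, Set.mem_compl_iff]
    intro j hj
    exact fun hyj => hy2 j hj hyj
  -- validity of the atom A.erase i
  have hEne : (A.erase i).Nonempty := by
    rw [← Finset.card_pos, Finset.card_erase_of_mem hi]
    omega
  have condE : (A.erase i).Nonempty ∧
      ((⋂ j ∈ A.erase i, S j) ∩ (⋂ j ∈ (A.erase i)ᶜ, (S j)ᶜ)).Nonempty := by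
    refine ⟨hEne, ?_⟩
    have hne : (⋂ j ∈ A.erase i, S j).Nonempty := by
      refine ⟨x, ?_⟩
      simp only [Set.mem_iInter] at hxA ⊢
      intro j hj
      exact hxA j (Finset.mem_of_mem_erase hj)
    have := hgen _ hEne hne
    obtain ⟨y, hy1, hy2⟩ := Set.not_subset.mp this
    refine ⟨y, hy1, ?_⟩
    simp only [Set.mem_iUnion, not_exists] at hy2
    simp only [Set.mem_iInter, Set.mem_compl_iff]
    intro j hj
    exact fun hyj => hy2 j hj hyj
  have condA : A.Nonempty ∧ ((⋂ j ∈ A, S j) ∩ (⋂ j ∈ Aᶜ, (S j)ᶜ)).Nonempty :=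
    ⟨⟨i, hi⟩, ⟨x, hx⟩⟩
  -- distinctness
  have hne1 : A ≠ {i} := by
    intro h; rw [h] at hA2; simp at hA2
  have hne2 : A ≠ A.erase i := by
    intro h
    have : i ∈ A.erase i := h ▸ hi
    exact (Finset.notMem_erase i A) this
  have hne3 : ({i} : Finset (Fin R)) ≠ A.erase i := by
    intro h
    have : i ∈ A.erase i := h ▸ Finset.mem_singleton_self i
    exact (Finset.notMem_erase i A) this
  -- the new assignment
  set c := m A - 1 with hc0
  have hc : m A = c + 1 := by omega
  set m₀ : Finset (Fin R) → ℕ := fun B => if B = A then c else m B with hm₀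
  set m' : Finset (Fin R) → ℕ := fun B =>
    m₀ B + (if B = {i} then 1 else 0) + (if B = A.erase i then 1 else 0) with hm'
  have key : ∀ f : Finset (Fin R) → ℕ,
      (∑ B : Finset (Fin R), f B * m' B) + f A =
      (∑ B : Finset (Fin R), f B * m B) + f {i} + f (A.erase i) := by
    intro f
    have e1 : ∑ B : Finset (Fin R), f B * (if B = ({i} : Finset (Fin R)) then 1 else 0)
        = f {i} := by
      simp [mul_ite]
    have e2 : ∑ B : Finset (Fin R), f B * (if B = A.erase i then 1 else 0)
        = f (A.erase i) := by
      simp [mul_ite]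
    have hm : ∑ B : Finset (Fin R), f B * m B
        = (∑ B : Finset (Fin R), f B * m₀ B) + f A := by
      have e3 : ∑ B : Finset (Fin R), f B * (if B = A then 1 else 0) = f A := by
        simp [mul_ite]
      rw [← e3, ← Finset.sum_add_distrib]
      refine Finset.sum_congr rfl (fun B _ => ?_)
      by_cases hB : B = A
      · subst hB; simp [hm₀, hc, mul_add]
      · simp [hm₀, hB]
    simp only [hm', mul_add, Finset.sum_add_distrib, e1, e2]
    rw [hm]
    omega
  refine ⟨m', ?_, ?_, ?_⟩
  · intro B hB
    have hBA : B ≠ A := fun h => hB (h ▸ condA)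
    have hBi : B ≠ {i} := fun h => hB (h ▸ condI)
    have hBe : B ≠ A.erase i := fun h => hB (h ▸ condE)
    simp [hm', hm₀, hBA, hBi, hBe, h0 B hB]
  · intro r
    have h := key (fun B => if r ∈ B then 1 else 0)
    simp only [ite_mul, one_mul, zero_mul] at h
    rw [h1 r] at h
    simp only [Finset.mem_singleton, Finset.mem_erase] at h
    by_cases hri : r = i
    · subst hri
      simp only [hi, if_true, ne_eq, not_true_eq_false, false_and, if_false] at h
      omega
    · by_cases hrA : r ∈ A
      · simp only [hrA, hri, if_true, if_false, ne_eq, not_false_eq_true,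
          true_and] at h
        omega
      · simp only [hrA, hri, if_false, ne_eq, and_false] at h
        omega
  · have h := key (fun _ => 1)
    simp only [one_mul] at h
    rw [h2] at h
    omega
end

section
/- Let S be a generic sensor configuration with constraint matrix A (rows of Aᵀ indexed by atoms), and let C(S) = {y : Aᵀ y ≤ 1} be the fusion polytope. Then for every non-negative measurement vector n, max{n·y : y ∈ C(S)} = max{n·y : y ∈ C(S) ∩ P}, where P is the non-negative orthant. Key step: if a is a row of Aᵀ (the 0–1 indicator of an atom's membership in the sensor regions) and y ∈ C(S), then the vector y' obtained from y by replacing all negative coordinates by 0 also satisfies Aᵀ y' ≤ 1, because genericity implies that for any row a of Aᵀ and any coordinate subset T, the vector that agrees with a off T and is 0 on T is again a row of Aᵀ. -/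
/-- For a generic configuration (in matrix form: every non-zero subrow of a row
of Aᵀ is again a row of Aᵀ), the maximum of n·y over the fusion polyhedron
equals the maximum over its intersection with the positive orthant.
Here `B` is the matrix Aᵀ whose rows are indexed by atoms. -/
theorem stmt8 {K R : ℕ} (B : Matrix (Fin K) (Fin R) ℝ)
    (hB : ∀ j r, B j r = 0 ∨ B j r = 1)
    (hgen : ∀ j : Fin K, ∀ a' : Fin R → ℝ,
      (∀ r, a' r = 0 ∨ a' r = B j r) → a' ≠ 0 →
      ∃ j' : Fin K, ∀ r, B j' r = a' r)
    (n : Fin R → ℝ) (hn : ∀ r, 0 ≤ n r) :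
    sSup {v : ℝ | ∃ y : Fin R → ℝ, (∀ j, ∑ r, B j r * y r ≤ 1) ∧
        v = ∑ r, n r * y r} =
    sSup {v : ℝ | ∃ y : Fin R → ℝ, (∀ j, ∑ r, B j r * y r ≤ 1) ∧
        (∀ r, 0 ≤ y r) ∧ v = ∑ r, n r * y r} := by
  set A := {v : ℝ | ∃ y : Fin R → ℝ, (∀ j, ∑ r, B j r * y r ≤ 1) ∧
      v = ∑ r, n r * y r} with hAdef
  set Bs := {v : ℝ | ∃ y : Fin R → ℝ, (∀ j, ∑ r, B j r * y r ≤ 1) ∧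
      (∀ r, 0 ≤ y r) ∧ v = ∑ r, n r * y r} with hBdef
  have hsub : Bs ⊆ A := by
    rintro v ⟨y, hy, _, hv⟩; exact ⟨y, hy, hv⟩
  have hdom : ∀ v ∈ A, ∃ w ∈ Bs, v ≤ w := by
    rintro v ⟨y, hy, rfl⟩
    refine ⟨∑ r, n r * max (y r) 0,
      ⟨fun r => max (y r) 0, ?_, fun r => le_max_right _ _, rfl⟩, ?_⟩
    · intro j
      by_cases h0 : (fun r => if 0 ≤ y r then B j r else 0) = 0
      · have hz : ∀ r, B j r * max (y r) 0 = 0 := by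
          intro r
          by_cases hr : 0 ≤ y r
          · have := congrFun h0 r
            simp [hr] at this
            simp [this]
          · simp [max_eq_right (le_of_lt (not_le.mp hr))]
        simp [hz]
      · obtain ⟨j', hj'⟩ := hgen j _ (fun r => by
          by_cases hr : 0 ≤ y r <;> simp [hr]) h0
        have heq : ∀ r, B j r * max (y r) 0 = B j' r * y r := by
          intro r
          by_cases hr : 0 ≤ y r
          · rw [hj' r]; simp [hr, max_eq_left hr]
          · rw [hj' r]; simp [hr, max_eq_right (le_of_lt (not_le.mp hr))]
        calc ∑ r, B j r * max (y r) 0 = ∑ r, B j' r * y r := by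
              exact Finset.sum_congr rfl fun r _ => heq r
          _ ≤ 1 := hy j'
    · exact Finset.sum_le_sum fun r _ =>
        mul_le_mul_of_nonneg_left (le_max_left _ _) (hn r)
  have hBne : Bs.Nonempty := ⟨0, 0, by simp, fun r => le_refl 0, by simp⟩
  have hAne : A.Nonempty := Set.Nonempty.mono hsub hBne
  by_cases hbdd : BddAbove A
  · apply le_antisymm
    · refine csSup_le hAne fun v hv => ?_
      obtain ⟨w, hw, hvw⟩ := hdom v hv
      exact hvw.trans (le_csSup (hbdd.mono hsub) hw)
    · exact csSup_le_csSup hbdd hBne hsub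
  · have hbddB : ¬ BddAbove Bs := by
      intro h
      apply hbdd
      obtain ⟨c, hc⟩ := h
      refine ⟨c, fun v hv => ?_⟩
      obtain ⟨w, hw, hvw⟩ := hdom v hv
      exact hvw.trans (hc hw)
    rw [Real.sSup_of_not_bddAbove hbdd, Real.sSup_of_not_bddAbove hbddB]
end

section
/- Let G = (V,E) be a finite graph. Every extreme point of FRAC(G) = {x ∈ ℝ^V : x ≥ 0, x_u + x_w ≤ 1 for all (u,w) ∈ E} has all coordinates in {0, 1/2, 1}. -/
noncomputable def dfun {V : Sort*} (x : V → ℝ) (u : V) : ℝ :=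
  if 0 < x u ∧ x u < 1/2 then 1 else if 1/2 < x u ∧ x u ≠ 1 then -1 else 0

lemma dsum {V : Sort*} (x : V → ℝ) (u w : V) (ha : 0 ≤ x u) (hb : 0 ≤ x w)
    (hab : x u + x w = 1) : dfun x u + dfun x w = 0 := by
  unfold dfun
  split_ifs <;>
    (try simp only [not_and_or, not_lt, not_not, ne_eq] at *) <;>
    try norm_num
  all_goals casesm* _ ∨ _, _ ∧ _ <;> simp_all <;>
    first | linarith | (exact absurd (by linarith : x u = 1) ‹_›)
          | (exact absurd (by linarith : x w = 1) ‹_›)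

lemma frac_mem {V : Type*} [Fintype V] (G : SimpleGraph V) (x d : V → ℝ) (ε : ℝ)
    (hxS : x ∈ {y : V → ℝ | (∀ v, 0 ≤ y v) ∧ ∀ u w, G.Adj u w → y u + y w ≤ 1})
    (hε : 0 < ε)
    (hd1 : ∀ v, |d v| ≤ 1)
    (hd0 : ∀ v, d v ≠ 0 → ε ≤ x v)
    (htight : ∀ u w, G.Adj u w → x u + x w = 1 → d u + d w = 0)
    (hslack : ∀ u w, G.Adj u w → x u + x w < 1 → 2 * ε ≤ 1 - (x u + x w)) :
    (x + ε • d) ∈ {y : V → ℝ | (∀ v, 0 ≤ y v) ∧ ∀ u w, G.Adj u w → y u + y w ≤ 1} := by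
  obtain ⟨hpos, hedge⟩ := hxS
  constructor
  · intro v
    by_cases h : d v = 0
    · simp [h]; exact hpos v
    · have h1 := hd0 v h
      have h2 := (abs_le.mp (hd1 v)).1
      have : ε * d v ≥ -ε := by nlinarith
      simp only [Pi.add_apply, Pi.smul_apply, smul_eq_mul]
      linarith
  · intro u w huw
    simp only [Pi.add_apply, Pi.smul_apply, smul_eq_mul]
    rcases lt_or_eq_of_le (hedge u w huw) with h | h
    · have h1 := (abs_le.mp (hd1 u)).2
      have h2 := (abs_le.mp (hd1 w)).2
      have := hslack u w huw h
      nlinarith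
    · have := htight u w huw h
      nlinarith

/-- Every extreme point of FRAC(G) has all coordinates in {0, 1/2, 1}. -/
theorem stmt12 {V : Type*} [Fintype V] (G : SimpleGraph V) (x : V → ℝ)
    (hx : x ∈ Set.extremePoints ℝ
      {y : V → ℝ | (∀ v, 0 ≤ y v) ∧ ∀ u w, G.Adj u w → y u + y w ≤ 1}) :
    ∀ v, x v = 0 ∨ x v = 1 / 2 ∨ x v = 1 := by
  intro v
  by_contra hcon
  push_neg at hcon
  obtain ⟨hv0, hvh, hv1⟩ := hcon
  obtain ⟨hxS, hext⟩ := hx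
  obtain ⟨hpos, hedge⟩ := hxS
  have hne : (Finset.univ : Finset V).Nonempty := ⟨v, Finset.mem_univ v⟩
  set d : V → ℝ := dfun x with hd
  -- ε definition
  set ε₁ : ℝ := Finset.univ.inf' hne (fun u => if 0 < x u then x u else 1) with hε₁
  set ε₂ : ℝ := Finset.univ.inf' hne (fun u =>
    Finset.univ.inf' hne (fun w => if x u + x w < 1 then (1 - (x u + x w))/2 else 1)) with hε₂
  set ε : ℝ := min ε₁ ε₂ with hεdef
  have hε₁pos : 0 < ε₁ := by
    rw [hε₁, Finset.lt_inf'_iff]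
    intro u _
    split_ifs with h
    · exact h
    · norm_num
  have hε₂pos : 0 < ε₂ := by
    rw [hε₂, Finset.lt_inf'_iff]
    intro u _
    rw [Finset.lt_inf'_iff]
    intro w _
    split_ifs with h
    · linarith
    · norm_num
  have hεpos : 0 < ε := lt_min hε₁pos hε₂pos
  have hd1 : ∀ u, |d u| ≤ 1 := by
    intro u
    rw [hd]; unfold dfun
    split_ifs <;> norm_num
  have hd0 : ∀ u, d u ≠ 0 → ε ≤ x u := by
    intro u hu
    have hxu : 0 < x u := by
      rw [hd] at hu; unfold dfun at hu
      split_ifs at hu with h1 h2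
      · exact h1.1
      · linarith [h2.1]
      · exact absurd rfl hu
    calc ε ≤ ε₁ := min_le_left _ _
      _ ≤ _ := by
        have h := Finset.inf'_le (fun u => if 0 < x u then x u else 1) (Finset.mem_univ u)
        rw [if_pos hxu] at h
        exact h
  have htight : ∀ u w, G.Adj u w → x u + x w = 1 → d u + d w = 0 := fun u w _ h =>
    dsum x u w (hpos u) (hpos w) h
  have hslack : ∀ u w, G.Adj u w → x u + x w < 1 → 2 * ε ≤ 1 - (x u + x w) := by
    intro u w _ h
    have h1 : ε₂ ≤ (1 - (x u + x w))/2 := by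
      calc ε₂ ≤ Finset.univ.inf' hne
            (fun w => if x u + x w < 1 then (1 - (x u + x w))/2 else 1) :=
          Finset.inf'_le _ (Finset.mem_univ u)
        _ ≤ _ := by
          have h2 := Finset.inf'_le (fun w' => if x u + x w' < 1 then (1 - (x u + x w'))/2 else 1)
            (Finset.mem_univ w)
          rw [if_pos h] at h2
          exact h2
    have h2 : ε ≤ ε₂ := min_le_right _ _
    linarith
  have hxS : x ∈ {y : V → ℝ | (∀ v, 0 ≤ y v) ∧ ∀ u w, G.Adj u w → y u + y w ≤ 1} :=
    ⟨hpos, hedge⟩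
  have hy := frac_mem G x d ε hxS hεpos hd1 hd0 htight hslack
  have hd1' : ∀ u, |(-d) u| ≤ 1 := by intro u; simpa using hd1 u
  have hd0' : ∀ u, (-d) u ≠ 0 → ε ≤ x u := by
    intro u hu; apply hd0; simpa using hu
  have htight' : ∀ u w, G.Adj u w → x u + x w = 1 → (-d) u + (-d) w = 0 := by
    intro u w h1 h2; have := htight u w h1 h2; simp; linarith
  have hz := frac_mem G x (-d) ε hxS hεpos hd1' hd0' htight' hslack
  have hseg : x ∈ openSegment ℝ (x + ε • d) (x + ε • (-d)) := by
    refine ⟨1/2, 1/2, by norm_num, by norm_num, by norm_num, ?_⟩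
    funext u
    simp only [Pi.add_apply, Pi.smul_apply, Pi.neg_apply, smul_eq_mul]
    ring
  have heq := hext hy hz hseg
  have hdv : d v ≠ 0 := by
    rw [hd]; unfold dfun
    rcases lt_trichotomy (x v) (1/2) with h | h | h
    · rw [if_pos ⟨lt_of_le_of_ne (hpos v) (Ne.symm hv0), h⟩]; norm_num
    · exact absurd h hvh
    · rw [if_neg (by intro hh; linarith [hh.2]), if_pos ⟨h, hv1⟩]; norm_num
  have : x v + ε * d v = x v := by
    conv_rhs => rw [← heq]
    simp
  have : ε * d v = 0 := by linarith
  rcases mul_eq_zero.mp this with h | h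
  · linarith
  · exact hdv h
end
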